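/- arXiv:math/0406050 — 2 statements merged into one kernel-verified Lean document; each statement's English description precedes it below -/
import Mathlib

section
/- Let n ≥ 3, 0 < δ ≤ 1, x₀ ∈ ℝⁿ, and let e ⊂ B_δ(x₀) be a compact set. Then cap(e, B_{2δ}(x₀)) ≤ c(n)·cap(e), where cap(e) = inf{ ∫(|∇u|² + |u|²) dx : u ∈ C₀^∞(ℝⁿ), u > 1 on e } is the Bessel capacity and cap(e, B_{2δ}(x₀)) is the Wiener capacity relative to B_{2δ}(x₀), and c(n) depends only on n. -/
open MeasureTheory Metric Set ENNReal Module
open scoped NNReal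

noncomputable section

abbrev Eu (n : ℕ) := EuclideanSpace ℝ (Fin n)

/-- Smooth compactly supported test function with support in `Ω`. -/
def TestIn (n : ℕ) (Ω : Set (Eu n)) (u : Eu n → ℝ) : Prop :=
  ContDiff ℝ (⊤ : ℕ∞) u ∧ HasCompactSupport u ∧ tsupport u ⊆ Ω

/-- Wiener capacity of `e` relative to the domain `Ω`:
`cap(e,Ω) = inf { ∫_Ω |∇u|² : u ∈ C₀^∞(Ω), u > 1 on e }`. -/
def wienerCap (n : ℕ) (Ω e : Set (Eu n)) : ℝ≥0∞ :=
  sInf {c | ∃ u : Eu n → ℝ, TestIn n Ω u ∧ (∀ x ∈ e, 1 < u x) ∧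
    c = ∫⁻ x, (‖fderiv ℝ u x‖₊ : ℝ≥0∞) ^ 2}

/-- Bessel capacity associated with `W^{1,2}(ℝⁿ)`:
`cap(e) = inf { ∫ (|∇u|² + |u|²) : u ∈ C₀^∞(ℝⁿ), u > 1 on e }`. -/
def besselCap (n : ℕ) (e : Set (Eu n)) : ℝ≥0∞ :=
  sInf {c | ∃ u : Eu n → ℝ, ContDiff ℝ (⊤ : ℕ∞) u ∧ HasCompactSupport u ∧
    (∀ x ∈ e, 1 < u x) ∧
    c = ∫⁻ x, ((‖fderiv ℝ u x‖₊ : ℝ≥0∞) ^ 2 + (‖u x‖₊ : ℝ≥0∞) ^ 2)}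


lemma sobolev_restrict (n : ℕ) (hn : 3 ≤ n) :
    ∃ C : ℝ≥0∞, C ≠ ∞ ∧ ∀ (r : ℝ), 0 ≤ r → ∀ (x₀ : Eu n) (u : Eu n → ℝ),
    ContDiff ℝ (⊤:ℕ∞) u → HasCompactSupport u →
    ∫⁻ x in closedBall x₀ r, (‖u x‖₊ : ℝ≥0∞)^2
      ≤ C * ENNReal.ofReal (r^2) * ∫⁻ x, (‖fderiv ℝ u x‖₊ : ℝ≥0∞)^2 := by
  have hfr : finrank ℝ (Eu n) = n := finrank_euclideanSpace_fin
  have hn0 : (0:ℝ) < n := by positivity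
  have hn2 : (2:ℝ) < n := by exact_mod_cast by omega
  have hn2' : (0:ℝ) < (n:ℝ) - 2 := by linarith
  set p' : ℝ≥0 := (2 * n / (n - 2) : ℝ).toNNReal with hp'def
  have hp'c : (p' : ℝ) = 2 * n / (n - 2) := by
    rw [hp'def, Real.coe_toNNReal]; positivity
  have hp'0 : p' ≠ 0 := by
    rw [← NNReal.coe_ne_zero, hp'c]; positivity
  have hp'inv : ((p' : ℝ))⁻¹ = ((2:ℝ≥0) : ℝ)⁻¹ - (finrank ℝ (Eu n) : ℝ)⁻¹ := by
    rw [hp'c, hfr]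
    push_cast
    field_simp
  set SC : ℝ≥0 := SNormLESNormFDerivOfEqConst ℝ (volume : Measure (Eu n)) 2 with hSC
  set V : ℝ≥0∞ := volume (ball (0 : Eu n) 1) with hV
  have hVfin : V ≠ ∞ := measure_ball_lt_top.ne
  refine ⟨(SC : ℝ≥0∞)^2 * V ^ ((2:ℝ)/n), by
    exact ENNReal.mul_ne_top (by simp) (ENNReal.rpow_ne_top_of_nonneg (by positivity) hVfin),
    ?_⟩
  intro r hr x₀ u hu h2u
  have hu1 : ContDiff ℝ 1 u := hu.of_le (by exact_mod_cast le_top)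
  have hsob : eLpNorm u p' volume ≤ SC * eLpNorm (fderiv ℝ u) 2 volume := by
    apply eLpNorm_le_eLpNorm_fderiv_of_eq (volume : Measure (Eu n)) hu1 h2u
      (by norm_num) (by rw [hfr]; omega) hp'inv
  set μB := volume.restrict (closedBall x₀ r) with hμB
  set A := ∫⁻ x in closedBall x₀ r, (‖u x‖₊:ℝ≥0∞)^2 with hA
  set D := ∫⁻ x, (‖fderiv ℝ u x‖₊:ℝ≥0∞)^2 with hD
  have hrp : ∀ (f : Eu n → ℝ≥0) (μ : Measure (Eu n)),
      (∫⁻ x, (f x : ℝ≥0∞) ^ ((2:ℝ≥0):ℝ) ∂μ) = ∫⁻ x, (f x : ℝ≥0∞)^2 ∂μ := by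
    intro f μ
    congr 1; funext x
    rw [show ((2:ℝ≥0):ℝ) = ((2:ℕ):ℝ) by norm_num, ENNReal.rpow_natCast]
  have e2 : eLpNorm u ((2:ℝ≥0):ℝ≥0∞) μB = A ^ ((1:ℝ)/2) := by
    rw [eLpNorm_nnreal_eq_lintegral (by norm_num : (2:ℝ≥0) ≠ 0)]
    simp only [enorm_eq_nnnorm]
    rw [hrp (fun x => ‖u x‖₊) μB]
    norm_num
    rfl
  have eD : eLpNorm (fderiv ℝ u) ((2:ℝ≥0):ℝ≥0∞) volume = D ^ ((1:ℝ)/2) := by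
    rw [eLpNorm_nnreal_eq_lintegral (by norm_num : (2:ℝ≥0) ≠ 0)]
    simp only [enorm_eq_nnnorm]
    rw [hrp (fun x => ‖fderiv ℝ u x‖₊) volume]
    norm_num
    rfl
  have hexp : 1/((2:ℝ≥0∞)).toReal - 1/(((p':ℝ≥0):ℝ≥0∞)).toReal = 1/(n:ℝ) := by
    rw [ENNReal.coe_toReal, hp'c, show ((2:ℝ≥0∞)).toReal = 2 by simp]
    have h₁ : (n:ℝ) ≠ 0 := hn0.ne'
    have h₂ : (n:ℝ) - 2 ≠ 0 := hn2'.ne'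
    field_simp
    ring
  have hle2p : ((2:ℝ≥0):ℝ≥0∞) ≤ ((p':ℝ≥0):ℝ≥0∞) := by
    rw [ENNReal.coe_le_coe, ← NNReal.coe_le_coe, hp'c]
    rw [le_div_iff₀ hn2']
    push_cast
    nlinarith
  have hVol : volume (closedBall x₀ r) = ENNReal.ofReal (r^n) * V := by
    rw [Measure.addHaar_closedBall volume x₀ hr, hfr, hV]
  have key : A ^ ((1:ℝ)/2) ≤ (SC : ℝ≥0∞) * (ENNReal.ofReal (r^n) * V)^((1:ℝ)/n)
      * D ^ ((1:ℝ)/2) := by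
    calc A ^ ((1:ℝ)/2) = eLpNorm u ((2:ℝ≥0):ℝ≥0∞) μB := e2.symm
      _ ≤ eLpNorm u ((p':ℝ≥0):ℝ≥0∞) μB * (μB Set.univ) ^ (1/((2:ℝ≥0∞)).toReal - 1/(((p':ℝ≥0):ℝ≥0∞)).toReal) :=
          eLpNorm_le_eLpNorm_mul_rpow_measure_univ hle2p hu.continuous.aestronglyMeasurable
      _ ≤ (SC * eLpNorm (fderiv ℝ u) ((2:ℝ≥0):ℝ≥0∞) volume) * (ENNReal.ofReal (r^n) * V)^((1:ℝ)/n) := by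
          rw [hexp]
          gcongr
          · exact le_trans (eLpNorm_mono_measure u Measure.restrict_le_self)
              ((by exact_mod_cast hsob : eLpNorm u ((p':ℝ≥0):ℝ≥0∞) volume ≤ _))
          · rw [hμB, Measure.restrict_apply_univ, hVol]
      _ = (SC : ℝ≥0∞) * (ENNReal.ofReal (r^n) * V)^((1:ℝ)/n) * D ^ ((1:ℝ)/2) := by
          rw [eD]; ring
  have key2 := ENNReal.rpow_le_rpow key (by norm_num : (0:ℝ) ≤ 2)
  have hA2 : (A ^ ((1:ℝ)/2)) ^ (2:ℝ) = A := by
    rw [← ENNReal.rpow_mul]; norm_num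
  have hD2 : (D ^ ((1:ℝ)/2)) ^ (2:ℝ) = D := by
    rw [← ENNReal.rpow_mul]; norm_num
  rw [hA2] at key2
  refine key2.trans (le_of_eq ?_)
  have h1 : ((SC:ℝ≥0∞)) ^ (2:ℝ) = (SC:ℝ≥0∞)^2 := by
    rw [show (2:ℝ) = ((2:ℕ):ℝ) by norm_num, ENNReal.rpow_natCast]
  have h2 : ((ENNReal.ofReal (r^n)) ^ ((1:ℝ)/n*2)) = ENNReal.ofReal (r^2) := by
    rw [ENNReal.ofReal_rpow_of_nonneg (by positivity) (by positivity),
      ← Real.rpow_natCast r n, ← Real.rpow_mul hr]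
    congr 1
    rw [show (n:ℝ) * (1/n*2) = 2 by field_simp, Real.rpow_two, sq]
  have h3 : ((V) ^ ((1:ℝ)/n*2)) = V ^ ((2:ℝ)/n) := by
    congr 1
    field_simp
  have h23 : (((ENNReal.ofReal (r^n) * V)) ^ ((1:ℝ)/n)) ^ (2:ℝ)
      = ENNReal.ofReal (r^2) * V ^ ((2:ℝ)/n) := by
    rw [← ENNReal.rpow_mul, ENNReal.mul_rpow_of_nonneg _ _ (by positivity), h2, h3]
  rw [ENNReal.mul_rpow_of_nonneg _ _ (by norm_num : (0:ℝ) ≤ 2),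
    ENNReal.mul_rpow_of_nonneg _ _ (by norm_num : (0:ℝ) ≤ 2), hD2, h1, h23]
  ring


lemma cutoff_exists (n : ℕ) :
    ∃ M : ℝ, 0 ≤ M ∧ ∀ (δ : ℝ), 0 < δ → ∀ x₀ : Eu n, ∃ η : Eu n → ℝ,
      ContDiff ℝ (⊤:ℕ∞) η ∧ HasCompactSupport η ∧
      tsupport η ⊆ closedBall x₀ (3/2*δ) ∧
      (∀ x ∈ closedBall x₀ δ, η x = 1) ∧ (∀ x, |η x| ≤ 1) ∧
      (∀ x, ‖fderiv ℝ η x‖ ≤ M * δ⁻¹) := by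
  set B : ContDiffBump (0 : Eu n) := ⟨1, 3/2, one_pos, by norm_num⟩ with hB
  have hBsm : ContDiff ℝ (⊤:ℕ∞) ⇑B := B.contDiff
  have hBcs : HasCompactSupport ⇑B := B.hasCompactSupport
  have hBd : HasCompactSupport (fderiv ℝ ⇑B) := hBcs.fderiv (𝕜 := ℝ)
  obtain ⟨M, hM⟩ := hBd.exists_bound_of_continuous (hBsm.continuous_fderiv (by simp))
  have hM0 : 0 ≤ M := le_trans (norm_nonneg _) (hM 0)
  refine ⟨M, hM0, ?_⟩
  intro δ hδ x₀
  set A : Eu n → Eu n := fun x => δ⁻¹ • (x - x₀) with hA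
  have hAsm : ContDiff ℝ (⊤:ℕ∞) A := (contDiff_id.sub contDiff_const).const_smul δ⁻¹
  set L : Eu n →L[ℝ] Eu n := δ⁻¹ • ContinuousLinearMap.id ℝ (Eu n) with hL
  have hAd : ∀ x, HasFDerivAt A L x := fun x =>
    ((hasFDerivAt_id x).sub_const x₀).const_smul δ⁻¹
  have hnormA : ∀ x, ‖A x‖ = δ⁻¹ * ‖x - x₀‖ := by
    intro x
    rw [hA]
    simp only [norm_smul, Real.norm_eq_abs, abs_of_pos (inv_pos.mpr hδ)]
  have hsupp : Function.support (fun x => B (A x)) ⊆ closedBall x₀ (3/2*δ) := by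
    intro x hx
    have h1 : A x ∈ Function.support ⇑B := fun h => hx (by simp [h])
    rw [B.support_eq] at h1
    have h2 : ‖A x‖ < 3/2 := mem_ball_zero_iff.mp h1
    rw [hnormA] at h2
    rw [mem_closedBall, dist_eq_norm]
    nlinarith [norm_nonneg (x - x₀), inv_pos.mpr hδ, mul_pos hδ (inv_pos.mpr hδ),
      inv_mul_cancel₀ hδ.ne']
  have hcs : HasCompactSupport (fun x => B (A x)) :=
    HasCompactSupport.intro (isCompact_closedBall x₀ (3/2*δ))
      (fun x hx => by
        by_contra h
        exact hx (hsupp (Function.mem_support.mpr h)))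
  refine ⟨fun x => B (A x), hBsm.comp hAsm, hcs,
    closure_minimal hsupp isClosed_closedBall, ?_, ?_, ?_⟩
  · intro x hx
    apply B.one_of_mem_closedBall
    rw [mem_closedBall_zero_iff, hnormA]
    rw [mem_closedBall, dist_eq_norm] at hx
    calc δ⁻¹ * ‖x - x₀‖ ≤ δ⁻¹ * δ := by
          apply mul_le_mul_of_nonneg_left hx (le_of_lt (inv_pos.mpr hδ))
      _ = 1 := inv_mul_cancel₀ hδ.ne'
  · intro x
    rw [abs_le]
    exact ⟨le_trans (by norm_num) (B.nonneg' (A x)), B.le_one⟩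
  · intro x
    have hd : HasFDerivAt (fun x => B (A x)) ((fderiv ℝ ⇑B (A x)).comp L) x :=
      ((hBsm.differentiable (by simp) (A x)).hasFDerivAt).comp x (hAd x)
    rw [hd.fderiv]
    calc ‖(fderiv ℝ ⇑B (A x)).comp L‖ ≤ ‖fderiv ℝ ⇑B (A x)‖ * ‖L‖ :=
          ContinuousLinearMap.opNorm_comp_le _ _
      _ ≤ M * δ⁻¹ := by
          apply mul_le_mul (hM _) ?_ (norm_nonneg _) hM0
          rw [hL]
          calc ‖δ⁻¹ • ContinuousLinearMap.id ℝ (Eu n)‖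
              = |δ⁻¹| * ‖ContinuousLinearMap.id ℝ (Eu n)‖ := by
                rw [norm_smul δ⁻¹ (ContinuousLinearMap.id ℝ (Eu n)), Real.norm_eq_abs]
            _ ≤ δ⁻¹ * 1 := by
                rw [abs_of_pos (inv_pos.mpr hδ)]
                exact mul_le_mul_of_nonneg_left ContinuousLinearMap.norm_id_le
                  (le_of_lt (inv_pos.mpr hδ))
            _ = δ⁻¹ := mul_one _


lemma sq4 (a b : ℝ≥0∞) : (a + b)^2 ≤ 4*a^2 + 4*b^2 := by
  have h : a*b ≤ a^2 + b^2 := by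
    rcases le_total a b with h|h
    · calc a*b ≤ b*b := mul_le_mul' h le_rfl
        _ = b^2 := (sq b).symm
        _ ≤ a^2 + b^2 := le_add_self
    · calc a*b ≤ a*a := mul_le_mul' le_rfl h
        _ = a^2 := (sq a).symm
        _ ≤ a^2 + b^2 := le_self_add
  calc (a+b)^2 = a^2 + 2*(a*b) + b^2 := by ring
    _ ≤ a^2 + 2*(a^2+b^2) + b^2 := by gcongr
    _ = 3*a^2 + 3*b^2 := by ring
    _ ≤ 4*a^2 + 4*b^2 := by gcongr <;> norm_num



theorem stmt9 (n : ℕ) (hn : 3 ≤ n) :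
    ∃ c : ℝ≥0, 0 < c ∧ ∀ δ : ℝ, 0 < δ → δ ≤ 1 → ∀ (x₀ : Eu n) (e : Set (Eu n)),
      IsCompact e → e ⊆ ball x₀ δ →
      wienerCap n (ball x₀ (2 * δ)) e ≤ (c : ℝ≥0∞) * besselCap n e := by
  obtain ⟨C, hCfin, hSob⟩ := sobolev_restrict n hn
  obtain ⟨M, hM0, hcut⟩ := cutoff_exists n
  set K : ℝ≥0∞ := 4 + ENNReal.ofReal (16*M^2) * C with hKdef
  have hKfin : K ≠ ∞ := by
    rw [hKdef]
    exact ENNReal.add_ne_top.mpr ⟨by norm_num, ENNReal.mul_ne_top ENNReal.ofReal_ne_top hCfin⟩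
  refine ⟨K.toNNReal + 1, by positivity, ?_⟩
  intro δ hδ hδ1 x₀ e he hesub
  set cc : ℝ≥0∞ := ((K.toNNReal + 1 : ℝ≥0) : ℝ≥0∞) with hccdef
  have hKle : K ≤ cc := by
    rw [hccdef, ENNReal.coe_add, ENNReal.coe_toNNReal hKfin]
    exact le_self_add
  have hcc0 : cc ≠ 0 := by simp [hccdef]
  have hcctop : cc ≠ ∞ := by simp [hccdef]
  -- main estimate for each admissible u
  have hmain : ∀ b ∈ {c | ∃ u : Eu n → ℝ, ContDiff ℝ (⊤ : ℕ∞) u ∧ HasCompactSupport u ∧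
      (∀ x ∈ e, 1 < u x) ∧
      c = ∫⁻ x, ((‖fderiv ℝ u x‖₊ : ℝ≥0∞) ^ 2 + (‖u x‖₊ : ℝ≥0∞) ^ 2)},
      wienerCap n (ball x₀ (2 * δ)) e ≤ cc * b := by
    rintro b ⟨u, hu, hucs, hugt, rfl⟩
    obtain ⟨η, hηsm, hηcs, hηts, hη1, hηle, hηd⟩ := hcut δ hδ x₀
    set v : Eu n → ℝ := fun x => η x * u x with hvdef
    have hone : (1:ℕ∞) ≤ (⊤:ℕ∞) := le_top
    have hvsm : ContDiff ℝ (⊤:ℕ∞) v := hηsm.mul hu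
    have hvcs : HasCompactSupport v := hηcs.mul_right
    have h32 : closedBall x₀ (3/2*δ) ⊆ ball x₀ (2*δ) :=
      closedBall_subset_ball (by linarith)
    have hvts' : tsupport v ⊆ closedBall x₀ (3/2*δ) :=
      subset_trans tsupport_mul_subset_left hηts
    have hvts : tsupport v ⊆ ball x₀ (2*δ) := hvts'.trans h32
    have hvgt : ∀ x ∈ e, 1 < v x := by
      intro x hx
      have : η x = 1 := hη1 x (ball_subset_closedBall (hesub hx))
      rw [hvdef]
      simp only [this, one_mul]
      exact hugt x hx
    have hwle : wienerCap n (ball x₀ (2*δ)) e ≤ ∫⁻ x, (‖fderiv ℝ v x‖₊ : ℝ≥0∞)^2 :=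
      sInf_le ⟨v, ⟨hvsm, hvcs, hvts⟩, hvgt, rfl⟩
    set D := ∫⁻ x, (‖fderiv ℝ u x‖₊ : ℝ≥0∞)^2 with hD
    set KM : ℝ≥0∞ := ENNReal.ofReal (M * δ⁻¹) with hKM
    -- pointwise bound
    have hpt : ∀ x, (‖fderiv ℝ v x‖₊ : ℝ≥0∞)^2 ≤
        4*(‖fderiv ℝ u x‖₊ : ℝ≥0∞)^2 +
        (4*KM^2) * (closedBall x₀ (2*δ)).indicator (fun y => (‖u y‖₊:ℝ≥0∞)^2) x := by
      intro x
      by_cases hx : x ∈ closedBall x₀ (2*δ)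
      · have hud : HasFDerivAt u (fderiv ℝ u x) x :=
          (hu.differentiable (by simp) x).hasFDerivAt
        have hηdx : HasFDerivAt η (fderiv ℝ η x) x :=
          (hηsm.differentiable (by simp) x).hasFDerivAt
        have hvd : HasFDerivAt v (η x • fderiv ℝ u x + u x • fderiv ℝ η x) x :=
          hηdx.mul hud
        have hreal : ‖fderiv ℝ v x‖ ≤ ‖fderiv ℝ u x‖ + (M * δ⁻¹) * ‖u x‖ := by
          rw [hvd.fderiv]
          calc ‖η x • fderiv ℝ u x + u x • fderiv ℝ η x‖
              ≤ ‖η x • fderiv ℝ u x‖ + ‖u x • fderiv ℝ η x‖ := norm_add_le _ _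
            _ ≤ ‖fderiv ℝ u x‖ + (M * δ⁻¹) * ‖u x‖ := by
                apply add_le_add
                · rw [norm_smul, Real.norm_eq_abs]
                  calc |η x| * ‖fderiv ℝ u x‖ ≤ 1 * ‖fderiv ℝ u x‖ :=
                        mul_le_mul_of_nonneg_right (hηle x) (norm_nonneg _)
                    _ = ‖fderiv ℝ u x‖ := one_mul _
                · rw [norm_smul, Real.norm_eq_abs]
                  calc |u x| * ‖fderiv ℝ η x‖ ≤ |u x| * (M * δ⁻¹) :=
                        mul_le_mul_of_nonneg_left (hηd x) (abs_nonneg _)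
                    _ = (M * δ⁻¹) * |u x| := mul_comm _ _
        have hnn : (‖fderiv ℝ v x‖₊ : ℝ≥0∞) ≤ (‖fderiv ℝ u x‖₊:ℝ≥0∞) + KM * ‖u x‖₊ := by
          rw [← enorm_eq_nnnorm, ← enorm_eq_nnnorm, ← enorm_eq_nnnorm,
            ← ofReal_norm, ← ofReal_norm,
            ← ofReal_norm, hKM,
            ← ENNReal.ofReal_mul (by positivity), ← ENNReal.ofReal_add (norm_nonneg _)
              (by positivity)]
          exact ENNReal.ofReal_le_ofReal hreal
        calc (‖fderiv ℝ v x‖₊ : ℝ≥0∞)^2 ≤ ((‖fderiv ℝ u x‖₊:ℝ≥0∞) + KM * ‖u x‖₊)^2 := by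
              gcongr
          _ ≤ 4*(‖fderiv ℝ u x‖₊:ℝ≥0∞)^2 + 4*(KM * ‖u x‖₊)^2 := sq4 _ _
          _ = 4*(‖fderiv ℝ u x‖₊:ℝ≥0∞)^2 +
              (4*KM^2) * (closedBall x₀ (2*δ)).indicator (fun y => (‖u y‖₊:ℝ≥0∞)^2) x := by
              rw [Set.indicator_of_mem hx]
              ring
      · have hzero : fderiv ℝ v x = 0 := by
          by_contra h
          exact hx (h32.trans ball_subset_closedBall
            (hvts' (support_fderiv_subset ℝ (Function.mem_support.mpr h))))
        rw [hzero]
        simp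
    -- integrate
    have hcontDu : Continuous (fderiv ℝ u) := hu.continuous_fderiv (by simp)
    have m1 : Measurable fun x => (‖fderiv ℝ u x‖₊ : ℝ≥0∞)^2 :=
      (hcontDu.measurable.nnnorm.coe_nnreal_ennreal).pow_const 2
    have m2 : Measurable fun x => (‖u x‖₊ : ℝ≥0∞)^2 :=
      (hu.continuous.measurable.nnnorm.coe_nnreal_ennreal).pow_const 2
    have hKMfin : KM ≠ ∞ := ENNReal.ofReal_ne_top
    have step1 : ∫⁻ x, (‖fderiv ℝ v x‖₊ : ℝ≥0∞)^2 ≤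
        4*D + (4*KM^2) * ∫⁻ x in closedBall x₀ (2*δ), (‖u x‖₊:ℝ≥0∞)^2 := by
      calc ∫⁻ x, (‖fderiv ℝ v x‖₊ : ℝ≥0∞)^2
          ≤ ∫⁻ x, (4*(‖fderiv ℝ u x‖₊ : ℝ≥0∞)^2 +
            (4*KM^2) * (closedBall x₀ (2*δ)).indicator (fun y => (‖u y‖₊:ℝ≥0∞)^2) x) :=
            lintegral_mono hpt
        _ = (∫⁻ x, 4*(‖fderiv ℝ u x‖₊ : ℝ≥0∞)^2) +
            ∫⁻ x, (4*KM^2) * (closedBall x₀ (2*δ)).indicator (fun y => (‖u y‖₊:ℝ≥0∞)^2) x :=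
            lintegral_add_left (measurable_const.mul m1) _
        _ = 4*D + (4*KM^2) * ∫⁻ x in closedBall x₀ (2*δ), (‖u x‖₊:ℝ≥0∞)^2 := by
            rw [lintegral_const_mul' 4 _ (by norm_num),
              lintegral_const_mul' (4*KM^2) _
                (ENNReal.mul_ne_top (by norm_num) (by simp [pow_two, ENNReal.mul_ne_top, hKMfin])),
              lintegral_indicator measurableSet_closedBall]
    have hsb := hSob (2*δ) (by linarith) x₀ u hu hucs
    have hconst : (4*KM^2) * (C * ENNReal.ofReal ((2*δ)^2)) = ENNReal.ofReal (16*M^2) * C := by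
      rw [hKM, ← ENNReal.ofReal_pow (by positivity),
        show ((2*δ)^2 : ℝ) = 4*δ^2 by ring]
      rw [show (4:ℝ≥0∞) = ENNReal.ofReal 4 by norm_num]
      rw [← ENNReal.ofReal_mul (by norm_num)]
      calc ENNReal.ofReal (4 * (M*δ⁻¹)^2) * (C * ENNReal.ofReal (4*δ^2))
          = (ENNReal.ofReal (4 * (M*δ⁻¹)^2) * ENNReal.ofReal (4*δ^2)) * C := by ring
        _ = ENNReal.ofReal (16*M^2) * C := by
            rw [← ENNReal.ofReal_mul (by positivity)]
            congr 2
            field_simp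
            ring
    have step2 : ∫⁻ x, (‖fderiv ℝ v x‖₊ : ℝ≥0∞)^2 ≤ K * D := by
      refine step1.trans ?_
      have : (4*KM^2) * ∫⁻ x in closedBall x₀ (2*δ), (‖u x‖₊:ℝ≥0∞)^2
          ≤ ENNReal.ofReal (16*M^2) * C * D := by
        calc (4*KM^2) * ∫⁻ x in closedBall x₀ (2*δ), (‖u x‖₊:ℝ≥0∞)^2
            ≤ (4*KM^2) * (C * ENNReal.ofReal ((2*δ)^2) * D) := by gcongr
          _ = (4*KM^2) * (C * ENNReal.ofReal ((2*δ)^2)) * D := by ring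
          _ = ENNReal.ofReal (16*M^2) * C * D := by rw [hconst]
      calc 4*D + (4*KM^2) * ∫⁻ x in closedBall x₀ (2*δ), (‖u x‖₊:ℝ≥0∞)^2
          ≤ 4*D + ENNReal.ofReal (16*M^2) * C * D := by gcongr
        _ = K * D := by rw [hKdef]; ring
    have hDb : D ≤ ∫⁻ x, ((‖fderiv ℝ u x‖₊ : ℝ≥0∞) ^ 2 + (‖u x‖₊ : ℝ≥0∞) ^ 2) :=
      lintegral_mono fun x => le_self_add
    calc wienerCap n (ball x₀ (2*δ)) e ≤ ∫⁻ x, (‖fderiv ℝ v x‖₊ : ℝ≥0∞)^2 := hwle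
      _ ≤ K * D := step2
      _ ≤ cc * ∫⁻ x, ((‖fderiv ℝ u x‖₊ : ℝ≥0∞) ^ 2 + (‖u x‖₊ : ℝ≥0∞) ^ 2) := by
          exact mul_le_mul' hKle hDb
  -- conclude via sInf
  have hdiv : wienerCap n (ball x₀ (2*δ)) e / cc ≤ besselCap n e := by
    apply le_sInf
    intro b hb
    exact (ENNReal.div_le_iff_le_mul (Or.inl hcc0) (Or.inl hcctop)).mpr
      ((hmain b hb).trans_eq (mul_comm _ _))
  have := (ENNReal.div_le_iff_le_mul (Or.inl hcc0) (Or.inl hcctop)).mp hdiv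
  exact this.trans_eq (mul_comm _ _)
end
end

section
/- Let n = 2 and 1 ≤ 2τ < ∞. Let μ be a nonnegative measure supported on a compact set e ⊂ B_δ(x₀) with 0 < δ ≤ 1, and P = G₂⋆μ. Then ∫_{B_{2δ}(x₀)} P^{2τ} dx ≤ c(τ)·δ²·log^{2τ}(2/δ)·μ(e)^{2τ}. -/
open MeasureTheory Metric Set ENNReal
open scoped NNReal

noncomputable section

/-- The Bessel kernel `G_α` on `ℝⁿ`, given by its subordination (heat kernel) formula. -/
def besselKernel (n : ℕ) (α : ℝ) (x : Eu n) : ℝ :=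
  (1 / ((4 * Real.pi) ^ (α / 2) * Real.Gamma (α / 2))) *
    ∫ t in Set.Ioi (0 : ℝ),
      Real.exp (-(Real.pi * ‖x‖ ^ 2) / t) * Real.exp (-t / (4 * Real.pi)) *
        t ^ ((α - n) / 2 - 1)

/-- The Bessel potential `P = G₂ ⋆ μ` of a measure `μ` on `ℝ²`, with values in `[0,∞]`. -/
def besselPot2 (μ : Measure (Eu 2)) (x : Eu 2) : ℝ≥0∞ :=
  ∫⁻ y, ENNReal.ofReal (besselKernel 2 2 (x - y)) ∂μ

lemma besselKernel_measurable (n : ℕ) (α : ℝ) : Measurable (besselKernel n α) := by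
  apply Measurable.const_mul
  have h : Measurable (fun q : Eu n × ℝ =>
      Real.exp (-(Real.pi * ‖q.1‖ ^ 2) / q.2) * Real.exp (-q.2 / (4 * Real.pi)) *
        q.2 ^ ((α - n) / 2 - 1)) := by
    have h1 : Measurable fun q : Eu n × ℝ => ‖q.1‖ := measurable_fst.norm
    have h2 : Measurable fun q : Eu n × ℝ => q.2 ^ ((α - n) / 2 - 1) :=
      measurable_snd.pow measurable_const
    fun_prop
  exact (h.stronglyMeasurable.integral_prod_right' (ν := volume.restrict (Ioi 0))).measurable

lemma exp_int : ∫ t in Ioi (0:ℝ), Real.exp (-t / (4 * Real.pi)) = 4 * Real.pi := by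
  have hb : (0:ℝ) < (4 * Real.pi)⁻¹ := by positivity
  have h := integral_comp_mul_left_Ioi (fun x => Real.exp (-x)) 0 hb
  simp only [mul_zero, integral_exp_neg_Ioi_zero, smul_eq_mul, mul_one] at h
  have heq : (fun t : ℝ => Real.exp (-((4 * Real.pi)⁻¹ * t))) =
      fun t : ℝ => Real.exp (-t / (4 * Real.pi)) := by
    funext t; rw [neg_div]; ring_nf
  rw [heq] at h
  rw [h, inv_inv]

lemma exp_integrable : IntegrableOn (fun t : ℝ => Real.exp (-t / (4 * Real.pi))) (Ioi 0) := by
  have hb : (0:ℝ) < (4 * Real.pi)⁻¹ := by positivity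
  have := exp_neg_integrableOn_Ioi 0 hb
  refine this.congr_fun (fun t _ => ?_) measurableSet_Ioi
  rw [neg_div]; ring_nf

lemma lint_exp_le : ∫⁻ t in Ioi (0:ℝ), ENNReal.ofReal (Real.exp (-t / (4 * Real.pi)))
    ≤ ENNReal.ofReal (4 * Real.pi) := by
  rw [← ofReal_integral_eq_lintegral_ofReal exp_integrable
    (Filter.Eventually.of_forall fun t => (Real.exp_pos _).le), exp_int]

/-- Main kernel upper bound. -/
lemma kernel_le (z : Eu 2) (hz : z ≠ 0) :
    ENNReal.ofReal (besselKernel 2 2 z) ≤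
      2 + 2 * ENNReal.ofReal (Real.log (1 / ‖z‖)) := by
  have hznorm : 0 < ‖z‖ := norm_pos_iff.mpr hz
  set a : ℝ := Real.pi * ‖z‖ ^ 2 with ha_def
  have ha : 0 < a := by positivity
  set f : ℝ → ℝ := fun t => Real.exp (-a / t) * Real.exp (-t / (4 * Real.pi)) * t ^ (-1 : ℝ)
    with hf_def
  have hker : besselKernel 2 2 z = (1 / (4 * Real.pi)) * ∫ t in Ioi (0:ℝ), f t := by
    rw [besselKernel]
    norm_num [Real.Gamma_one, Real.rpow_one]
    rfl
  have hfm : Measurable f := by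
    have h2 : Measurable fun t : ℝ => t ^ (-1 : ℝ) := measurable_id.pow measurable_const
    fun_prop
  -- the lintegral bound
  set M : ℝ := max 0 (Real.log a⁻¹) with hM_def
  have hM0 : 0 ≤ M := le_max_left _ _
  have key : ∫⁻ t in Ioi (0:ℝ), ENNReal.ofReal (f t) ≤
      ENNReal.ofReal (1 + M + 4 * Real.pi) := by
    have hsplit : Ioc (0:ℝ) a ∪ Ioi a = Ioi 0 := Ioc_union_Ioi_eq_Ioi ha.le
    set m : ℝ := max a 1 with hm_def
    have ham : a ≤ m := le_max_left _ _
    have hm1 : (1:ℝ) ≤ m := le_max_right _ _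
    have hsplit2 : Ioc a m ∪ Ioi m = Ioi a := Ioc_union_Ioi_eq_Ioi ham
    have S1 : ∫⁻ t in Ioc (0:ℝ) a, ENNReal.ofReal (f t) ≤ 1 := by
      have hb : ∀ t ∈ Ioc (0:ℝ) a, ENNReal.ofReal (f t) ≤ ENNReal.ofReal a⁻¹ := by
        intro t ht
        apply ENNReal.ofReal_le_ofReal
        have ht0 : 0 < t := ht.1
        have h1 : Real.exp (-a / t) ≤ t / a := by
          rw [neg_div, Real.exp_neg]
          rw [inv_le_comm₀ (Real.exp_pos _) (by positivity)]
          calc (t / a)⁻¹ = a / t := by rw [inv_div]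
          _ ≤ Real.exp (a / t) := by
              nlinarith [Real.add_one_le_exp (a / t)]
        have h2 : Real.exp (-t / (4 * Real.pi)) ≤ 1 := Real.exp_le_one_iff.mpr
          (by rw [neg_div]; exact neg_nonpos.mpr (by positivity))
        have h3 : t ^ (-1 : ℝ) = t⁻¹ := Real.rpow_neg_one t
        calc f t ≤ (t / a) * 1 * t⁻¹ := by
              rw [hf_def]; simp only [h3]
              apply mul_le_mul (mul_le_mul h1 h2 (Real.exp_pos _).le (by positivity))
                le_rfl (by positivity) (by positivity)
        _ = a⁻¹ := by field_simp
      calc ∫⁻ t in Ioc (0:ℝ) a, ENNReal.ofReal (f t)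
          ≤ ∫⁻ _ in Ioc (0:ℝ) a, ENNReal.ofReal a⁻¹ := setLIntegral_mono measurable_const hb
        _ = ENNReal.ofReal a⁻¹ * volume (Ioc (0:ℝ) a) := setLIntegral_const _ _
        _ = ENNReal.ofReal a⁻¹ * ENNReal.ofReal a := by rw [Real.volume_Ioc, sub_zero]
        _ = 1 := by
            rw [← ENNReal.ofReal_mul (by positivity), inv_mul_cancel₀ ha.ne']
            simp
    have S2a : ∫⁻ t in Ioc a m, ENNReal.ofReal (f t) ≤ ENNReal.ofReal M := by
      have hb : ∀ t ∈ Ioc a m, ENNReal.ofReal (f t) ≤ ENNReal.ofReal t⁻¹ := by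
        intro t ht
        apply ENNReal.ofReal_le_ofReal
        have ht0 : 0 < t := lt_trans ha ht.1
        have h3 : t ^ (-1 : ℝ) = t⁻¹ := Real.rpow_neg_one t
        have e1 : Real.exp (-a / t) ≤ 1 := Real.exp_le_one_iff.mpr
          (by rw [neg_div]; exact neg_nonpos.mpr (by positivity))
        have e2 : Real.exp (-t / (4 * Real.pi)) ≤ 1 := Real.exp_le_one_iff.mpr
          (by rw [neg_div]; exact neg_nonpos.mpr (by positivity))
        have e12 : Real.exp (-a / t) * Real.exp (-t / (4 * Real.pi)) ≤ 1 :=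
          mul_le_one₀ e1 (Real.exp_pos _).le e2
        calc f t = Real.exp (-a / t) * Real.exp (-t / (4 * Real.pi)) * t⁻¹ := by
              rw [hf_def]; simp only [h3]
        _ ≤ 1 * t⁻¹ := mul_le_mul_of_nonneg_right e12 (by positivity)
        _ = t⁻¹ := by ring
      have hint : IntegrableOn (fun t : ℝ => t⁻¹) (Ioc a m) := by
        have : IntegrableOn (fun t : ℝ => t⁻¹) (Icc a m) := by
          apply ContinuousOn.integrableOn_Icc
          exact ContinuousOn.inv₀ continuousOn_id (fun t ht => (lt_of_lt_of_le ha ht.1).ne')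
        exact this.mono_set Ioc_subset_Icc_self
      calc ∫⁻ t in Ioc a m, ENNReal.ofReal (f t)
          ≤ ∫⁻ t in Ioc a m, ENNReal.ofReal t⁻¹ := setLIntegral_mono (by fun_prop) hb
        _ = ENNReal.ofReal (∫ t in Ioc a m, t⁻¹) := by
            rw [← ofReal_integral_eq_lintegral_ofReal hint]
            apply (ae_restrict_iff' measurableSet_Ioc).mpr
            exact Filter.Eventually.of_forall fun t ht =>
              (inv_pos.mpr (lt_trans ha ht.1)).le
        _ ≤ ENNReal.ofReal M := by
            apply ENNReal.ofReal_le_ofReal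
            rw [← intervalIntegral.integral_of_le ham, integral_inv (by
              intro h
              rcases h with h
              rw [Set.uIcc_of_le ham] at h
              exact absurd h.1 (not_le.mpr ha))]
            rcases le_total a 1 with h1 | h1
            · have : m = 1 := max_eq_right h1
              rw [this, hM_def]
              rw [one_div]
              exact le_max_right _ _
            · have : m = a := max_eq_left h1
              rw [this, div_self ha.ne']
              simpa using hM0
    have S2b : ∫⁻ t in Ioi m, ENNReal.ofReal (f t) ≤ ENNReal.ofReal (4 * Real.pi) := by
      have hb : ∀ t ∈ Ioi m, ENNReal.ofReal (f t) ≤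
          ENNReal.ofReal (Real.exp (-t / (4 * Real.pi))) := by
        intro t ht
        apply ENNReal.ofReal_le_ofReal
        have ht0 : 0 < t := lt_of_le_of_lt (le_trans one_pos.le hm1) ht
        have ht1 : 1 ≤ t := le_of_lt (lt_of_le_of_lt hm1 ht)
        have h3 : t ^ (-1 : ℝ) = t⁻¹ := Real.rpow_neg_one t
        have e1 : Real.exp (-a / t) ≤ 1 := Real.exp_le_one_iff.mpr
          (by rw [neg_div]; exact neg_nonpos.mpr (by positivity))
        have e3 : t⁻¹ ≤ 1 := inv_le_one_of_one_le₀ ht1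
        calc f t = Real.exp (-a / t) * Real.exp (-t / (4 * Real.pi)) * t⁻¹ := by
              rw [hf_def]; simp only [h3]
        _ ≤ 1 * Real.exp (-t / (4 * Real.pi)) * 1 := by
            apply mul_le_mul _ e3 (by positivity) (by positivity)
            exact mul_le_mul_of_nonneg_right e1 (Real.exp_pos _).le
        _ = Real.exp (-t / (4 * Real.pi)) := by ring
      calc ∫⁻ t in Ioi m, ENNReal.ofReal (f t)
          ≤ ∫⁻ t in Ioi m, ENNReal.ofReal (Real.exp (-t / (4 * Real.pi))) :=
            setLIntegral_mono (by fun_prop) hb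
        _ ≤ ∫⁻ t in Ioi (0:ℝ), ENNReal.ofReal (Real.exp (-t / (4 * Real.pi))) :=
            lintegral_mono_set (Ioi_subset_Ioi (le_trans one_pos.le hm1))
        _ ≤ ENNReal.ofReal (4 * Real.pi) := lint_exp_le
    calc ∫⁻ t in Ioi (0:ℝ), ENNReal.ofReal (f t)
        = ∫⁻ t in Ioc (0:ℝ) a ∪ Ioi a, ENNReal.ofReal (f t) := by rw [hsplit]
      _ ≤ (∫⁻ t in Ioc (0:ℝ) a, ENNReal.ofReal (f t)) +
          ∫⁻ t in Ioi a, ENNReal.ofReal (f t) := lintegral_union_le _ _ _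
      _ ≤ 1 + (∫⁻ t in Ioc a m ∪ Ioi m, ENNReal.ofReal (f t)) := by
          rw [hsplit2]; exact add_le_add S1 le_rfl
      _ ≤ 1 + (ENNReal.ofReal M + ENNReal.ofReal (4 * Real.pi)) := by
          refine add_le_add le_rfl (le_trans (lintegral_union_le _ _ _) (add_le_add S2a S2b))
      _ = ENNReal.ofReal (1 + M + 4 * Real.pi) := by
          rw [ENNReal.ofReal_add (by positivity) (by positivity),
            ENNReal.ofReal_add (by norm_num) hM0]
          simp [add_assoc]
  -- from lintegral bound to real bound
  have hI : (∫ t in Ioi (0:ℝ), f t) ≤ 1 + M + 4 * Real.pi := by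
    rw [integral_eq_lintegral_of_nonneg_ae ?_ ?_]
    · exact ENNReal.toReal_le_of_le_ofReal (by positivity) key
    · apply (ae_restrict_iff' measurableSet_Ioi).mpr
      refine Filter.Eventually.of_forall fun t ht => ?_
      have ht0 : 0 < t := ht
      rw [hf_def]
      have : (0:ℝ) < t ^ (-1:ℝ) := Real.rpow_pos_of_pos ht0 _
      positivity
    · exact hfm.aestronglyMeasurable
  have hIpos : 0 ≤ ∫ t in Ioi (0:ℝ), f t := by
    apply integral_nonneg_of_ae
    apply (ae_restrict_iff' measurableSet_Ioi).mpr
    refine Filter.Eventually.of_forall fun t ht => ?_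
    have ht0 : 0 < t := ht
    rw [hf_def]
    have : (0:ℝ) < t ^ (-1:ℝ) := Real.rpow_pos_of_pos ht0 _
    positivity
  -- real-side final estimate
  set L : ℝ := max 0 (Real.log (1/‖z‖)) with hL_def
  have hL0 : 0 ≤ L := le_max_left _ _
  have hML : M ≤ 2 * L := by
    rw [hM_def]
    apply max_le
    · positivity
    · calc Real.log a⁻¹ = -(Real.log Real.pi + 2 * Real.log ‖z‖) := by
            rw [Real.log_inv, ha_def, Real.log_mul Real.pi_pos.ne' (by positivity),
              Real.log_pow]
            push_cast; ring
      _ ≤ 2 * -Real.log ‖z‖ := by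
          have : 0 ≤ Real.log Real.pi := Real.log_nonneg (le_of_lt Real.pi_gt_three |>.trans' (by norm_num))
          linarith
      _ = 2 * Real.log (1/‖z‖) := by rw [one_div, Real.log_inv]
      _ ≤ 2 * L := by
          apply mul_le_mul_of_nonneg_left (le_max_right _ _) (by norm_num)
  have hreal : besselKernel 2 2 z ≤ 2 + 2 * L := by
    rw [hker]
    have hπ : (3:ℝ) < Real.pi := Real.pi_gt_three
    calc (1 / (4 * Real.pi)) * ∫ t in Ioi (0:ℝ), f t
        ≤ (1 / (4 * Real.pi)) * (1 + M + 4 * Real.pi) := by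
          apply mul_le_mul_of_nonneg_left hI (by positivity)
      _ ≤ 2 + 2 * L := by
          rw [div_mul_eq_mul_div, one_mul, div_le_iff₀ (by positivity)]
          nlinarith
  calc ENNReal.ofReal (besselKernel 2 2 z) ≤ ENNReal.ofReal (2 + 2 * L) :=
        ENNReal.ofReal_le_ofReal hreal
    _ = 2 + 2 * ENNReal.ofReal (Real.log (1/‖z‖)) := by
        rw [ENNReal.ofReal_add (by norm_num) (by positivity), ENNReal.ofReal_mul (by norm_num)]
        congr 1
        · norm_num
        · congr 1
          · norm_num
          · rw [hL_def]
            rcases le_total (Real.log (1/‖z‖)) 0 with h | h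
            · rw [max_eq_left h, ENNReal.ofReal_of_nonpos h]; simp
            · rw [max_eq_right h]

def V2 : ℝ≥0∞ := volume (ball (0 : Eu 2) 1)

lemma V2_lt_top : V2 < ⊤ := measure_ball_lt_top

lemma vol_ball (r : ℝ) (hr : 0 ≤ r) :
    volume (ball (0 : Eu 2) r) = ENNReal.ofReal (r ^ 2) * V2 := by
  rw [V2, Measure.addHaar_ball volume 0 hr, finrank_euclideanSpace_fin]

lemma geo_sum_le : ∑' n : ℕ, (2⁻¹ : ℝ≥0∞) ^ (n + 1) ≤ 2 := by
  calc ∑' n : ℕ, (2⁻¹ : ℝ≥0∞) ^ (n + 1) ≤ ∑' n : ℕ, (2⁻¹ : ℝ≥0∞) ^ n := by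
        apply ENNReal.tsum_le_tsum
        intro n
        rw [pow_succ]
        calc (2⁻¹ : ℝ≥0∞) ^ n * 2⁻¹ ≤ (2⁻¹ : ℝ≥0∞) ^ n * 1 := by
              apply mul_le_mul_right
              simp
        _ = (2⁻¹ : ℝ≥0∞) ^ n := mul_one _
  _ = (1 - 2⁻¹)⁻¹ := ENNReal.tsum_geometric _
  _ = 2 := by simp [ENNReal.one_sub_inv_two]

lemma rpow_ball_int {R : ℝ} (hR : 0 < R) :
    ∫⁻ z in ball (0 : Eu 2) R, ENNReal.ofReal (‖z‖ ^ (-(1/2) : ℝ))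
      ≤ 8 * ENNReal.ofReal (R ^ ((3:ℝ)/2)) * V2 := by
  set A : ℕ → Set (Eu 2) := fun n => ball (0 : Eu 2) (R / 2 ^ n) \ ball 0 (R / 2 ^ (n+1))
    with hA
  have hcover : ball (0 : Eu 2) R ⊆ {0} ∪ ⋃ n, A n := by
    intro z hz
    rcases eq_or_ne z 0 with rfl | hz0
    · exact Or.inl rfl
    · right
      have hz1 : 0 < ‖z‖ := norm_pos_iff.mpr hz0
      have hzR : ‖z‖ < R := by simpa [mem_ball, dist_eq_norm] using hz
      have hex : ∃ n : ℕ, R / 2 ^ (n+1) ≤ ‖z‖ := by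
        obtain ⟨n, hn⟩ := pow_unbounded_of_one_lt (R / ‖z‖) (one_lt_two (α := ℝ))
        refine ⟨n, ?_⟩
        rw [div_le_iff₀ (by positivity)]
        rw [div_lt_iff₀ hz1] at hn
        calc R ≤ 2 ^ n * ‖z‖ := hn.le
        _ = ‖z‖ * 2 ^ n := mul_comm _ _
        _ ≤ ‖z‖ * 2 ^ (n+1) := by
            apply mul_le_mul_of_nonneg_left _ hz1.le
            exact pow_le_pow_right₀ one_le_two (Nat.le_succ n)
      classical
      set n := Nat.find hex with hn_def
      have hn1 : R / 2 ^ (n+1) ≤ ‖z‖ := Nat.find_spec hex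
      have hn2 : ‖z‖ < R / 2 ^ n := by
        rcases Nat.eq_zero_or_pos n with h0 | h0
        · rw [h0]; simpa using hzR
        · have hlt : n - 1 < n := Nat.sub_lt h0 one_pos
          have hmin := Nat.find_min hex hlt
          push_neg at hmin
          rwa [Nat.sub_add_cancel h0] at hmin
      refine mem_iUnion.mpr ⟨n, ?_, ?_⟩
      · simpa [mem_ball, dist_eq_norm] using hn2
      · simpa [mem_ball, dist_eq_norm, not_lt] using hn1
  have hofReal_half : ((2⁻¹ : ℝ≥0∞)) = ENNReal.ofReal ((2:ℝ)⁻¹) := by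
    rw [ENNReal.ofReal_inv_of_pos two_pos]
    norm_num
  have hterm : ∀ n : ℕ, ∫⁻ z in A n, ENNReal.ofReal (‖z‖ ^ (-(1/2) : ℝ))
      ≤ (4 * ENNReal.ofReal (R ^ ((3:ℝ)/2)) * V2) * (2⁻¹ : ℝ≥0∞) ^ (n+1) := by
    intro n
    set r : ℝ := R / 2 ^ (n+1) with hr_def
    have hr : 0 < r := by positivity
    have hbd : ∀ z ∈ A n, ENNReal.ofReal (‖z‖ ^ (-(1/2) : ℝ))
        ≤ ENNReal.ofReal (r ^ (-(1/2) : ℝ)) := by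
      intro z hzA
      apply ENNReal.ofReal_le_ofReal
      have hz : r ≤ ‖z‖ := by
        have := hzA.2
        simpa [mem_ball, dist_eq_norm, not_lt] using this
      exact Real.rpow_le_rpow_of_nonpos hr hz (by norm_num)
    have hsub : A n ⊆ ball (0 : Eu 2) (R / 2 ^ n) := diff_subset
    have hkey : r ^ (-(1/2) : ℝ) * (R / 2 ^ n) ^ 2 = 4 * r ^ ((3:ℝ)/2) := by
      have h2 : (R / 2 ^ n) = 2 * r := by rw [hr_def]; ring
      rw [h2, mul_pow]
      have h4 : r ^ (2:ℕ) = r ^ ((2:ℕ):ℝ) := (Real.rpow_natCast r 2).symm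
      rw [h4, ← mul_assoc, mul_comm (r ^ (-(1/2):ℝ))]
      rw [mul_assoc, ← Real.rpow_add hr]
      norm_num
    have hpow : ((2:ℝ) ^ (n+1)) ≤ ((2:ℝ) ^ (n+1)) ^ ((3:ℝ)/2) := by
      calc ((2:ℝ)^(n+1)) = ((2:ℝ)^(n+1)) ^ (1:ℝ) := (Real.rpow_one _).symm
      _ ≤ _ := Real.rpow_le_rpow_of_exponent_le (one_le_pow₀ one_le_two) (by norm_num)
    have hrR : r ^ ((3:ℝ)/2) ≤ R ^ ((3:ℝ)/2) * ((2:ℝ)⁻¹) ^ (n+1) := by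
      rw [hr_def, Real.div_rpow hR.le (by positivity)]
      rw [div_le_iff₀ (by positivity)]
      calc R ^ ((3:ℝ)/2) = R ^ ((3:ℝ)/2) * ((2:ℝ)⁻¹ ^ (n+1) * 2 ^ (n+1)) := by
            rw [inv_pow, inv_mul_cancel₀ (by positivity)]; ring
      _ ≤ R ^ ((3:ℝ)/2) * ((2:ℝ)⁻¹ ^ (n+1) * ((2:ℝ) ^ (n+1)) ^ ((3:ℝ)/2)) := by
            apply mul_le_mul_of_nonneg_left _ (by positivity)
            exact mul_le_mul_of_nonneg_left hpow (by positivity)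
      _ = R ^ ((3:ℝ)/2) * (2:ℝ)⁻¹ ^ (n+1) * ((2:ℝ) ^ (n+1)) ^ ((3:ℝ)/2) := by ring
    calc ∫⁻ z in A n, ENNReal.ofReal (‖z‖ ^ (-(1/2) : ℝ))
        ≤ ∫⁻ _ in A n, ENNReal.ofReal (r ^ (-(1/2) : ℝ)) :=
          setLIntegral_mono measurable_const hbd
      _ = ENNReal.ofReal (r ^ (-(1/2) : ℝ)) * volume (A n) := setLIntegral_const _ _
      _ ≤ ENNReal.ofReal (r ^ (-(1/2) : ℝ)) * volume (ball (0 : Eu 2) (R / 2 ^ n)) :=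
          mul_le_mul_right (measure_mono hsub) _
      _ = ENNReal.ofReal (r ^ (-(1/2) : ℝ)) * (ENNReal.ofReal ((R / 2 ^ n) ^ 2) * V2) := by
          rw [vol_ball _ (by positivity)]
      _ = ENNReal.ofReal (r ^ (-(1/2) : ℝ) * (R / 2 ^ n) ^ 2) * V2 := by
          rw [← mul_assoc, ← ENNReal.ofReal_mul (by positivity)]
      _ = ENNReal.ofReal (4 * r ^ ((3:ℝ)/2)) * V2 := by rw [hkey]
      _ ≤ ENNReal.ofReal (4 * (R ^ ((3:ℝ)/2) * ((2:ℝ)⁻¹) ^ (n+1))) * V2 := by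
          apply mul_le_mul_left
          apply ENNReal.ofReal_le_ofReal
          nlinarith [hrR]
      _ = (4 * ENNReal.ofReal (R ^ ((3:ℝ)/2)) * V2) * (2⁻¹ : ℝ≥0∞) ^ (n+1) := by
          rw [ENNReal.ofReal_mul (by norm_num), ENNReal.ofReal_mul (by positivity),
            hofReal_half, ← ENNReal.ofReal_pow (by norm_num)]
          norm_num
          ring
  calc ∫⁻ z in ball (0 : Eu 2) R, ENNReal.ofReal (‖z‖ ^ (-(1/2) : ℝ))
      ≤ ∫⁻ z in {0} ∪ ⋃ n, A n, ENNReal.ofReal (‖z‖ ^ (-(1/2) : ℝ)) :=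
        lintegral_mono_set hcover
    _ ≤ (∫⁻ z in ({0} : Set (Eu 2)), ENNReal.ofReal (‖z‖ ^ (-(1/2) : ℝ))) +
        ∫⁻ z in ⋃ n, A n, ENNReal.ofReal (‖z‖ ^ (-(1/2) : ℝ)) := lintegral_union_le _ _ _
    _ ≤ 0 + ∑' n, ∫⁻ z in A n, ENNReal.ofReal (‖z‖ ^ (-(1/2) : ℝ)) := by
        apply add_le_add
        · rw [setLIntegral_measure_zero _ _ (measure_singleton _)]
        · exact lintegral_iUnion_le _ _
    _ ≤ ∑' n, (4 * ENNReal.ofReal (R ^ ((3:ℝ)/2)) * V2) * (2⁻¹ : ℝ≥0∞) ^ (n+1) := by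
        rw [zero_add]; exact ENNReal.tsum_le_tsum hterm
    _ = (4 * ENNReal.ofReal (R ^ ((3:ℝ)/2)) * V2) * ∑' n : ℕ, (2⁻¹ : ℝ≥0∞) ^ (n+1) :=
        ENNReal.tsum_mul_left
    _ ≤ (4 * ENNReal.ofReal (R ^ ((3:ℝ)/2)) * V2) * 2 := mul_le_mul_right geo_sum_le _
    _ = 8 * ENNReal.ofReal (R ^ ((3:ℝ)/2)) * V2 := by ring

lemma rpow_add_le (a b : ℝ≥0∞) {p : ℝ} (hp : 0 ≤ p) :
    (a + b) ^ p ≤ 2 ^ p * (a ^ p + b ^ p) := by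
  calc (a + b) ^ p ≤ (2 * max a b) ^ p := by
        apply ENNReal.rpow_le_rpow _ hp
        rw [two_mul]
        exact add_le_add (le_max_left _ _) (le_max_right _ _)
  _ = 2 ^ p * (max a b) ^ p := ENNReal.mul_rpow_of_nonneg _ _ hp
  _ ≤ 2 ^ p * (a ^ p + b ^ p) := by
      apply mul_le_mul_right
      rcases max_cases a b with ⟨h, _⟩ | ⟨h, _⟩ <;> rw [h]
      · exact le_add_right le_rfl
      · exact le_add_left le_rfl
lemma log_le_rpow {x ε : ℝ} (hx : 0 < x) (hε : 0 < ε) : Real.log x ≤ x ^ ε / ε := by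
  have h1 : Real.log x = (1 / ε) * Real.log (x ^ ε) := by
    rw [Real.log_rpow hx]; field_simp
  rw [h1]
  have h2 : Real.log (x ^ ε) ≤ x ^ ε := by
    have := Real.log_le_sub_one_of_pos (Real.rpow_pos_of_pos hx ε); linarith
  calc 1 / ε * Real.log (x ^ ε) ≤ 1 / ε * x ^ ε :=
        mul_le_mul_of_nonneg_left h2 (by positivity)
  _ = x ^ ε / ε := by field_simp

/-- The key ball bound for powers of the log term. -/
lemma log_ball_int {p : ℝ} (hp : 1 ≤ p) :
    ∃ C : ℝ≥0∞, C ≠ ⊤ ∧ ∀ δ : ℝ, 0 < δ → δ ≤ 1 →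
      ∫⁻ z in ball (0 : Eu 2) (3 * δ),
          ((2 : ℝ≥0∞) + 2 * ENNReal.ofReal (Real.log (1 / ‖z‖))) ^ p
        ≤ C * ENNReal.ofReal (δ ^ 2) * (ENNReal.ofReal (Real.log (2 / δ))) ^ p := by
  have hp0 : (0:ℝ) < p := lt_of_lt_of_le one_pos hp
  set β : ℝ≥0∞ := (ENNReal.ofReal (Real.log 2)) ^ p with hβ
  have hβ0 : β ≠ 0 := by
    rw [hβ]
    apply (ENNReal.rpow_pos _ _).ne'
    · rw [ENNReal.ofReal_pos]
      linarith [Real.log_two_gt_d9]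
    · exact ENNReal.ofReal_ne_top
  have hβtop : β ≠ ⊤ := by
    rw [hβ]
    exact (ENNReal.rpow_lt_top_of_nonneg hp0.le ENNReal.ofReal_ne_top).ne
  refine ⟨2 ^ p * (5 ^ p * 9 * V2) +
      2 ^ p * (ENNReal.ofReal ((4 * p) ^ p) * 72 * V2) * β⁻¹, ?_, ?_⟩
  · apply ENNReal.add_ne_top.mpr
    constructor
    · apply ENNReal.mul_ne_top (ENNReal.rpow_lt_top_of_nonneg hp0.le (by norm_num)).ne
      apply ENNReal.mul_ne_top
      · exact ENNReal.mul_ne_top (ENNReal.rpow_lt_top_of_nonneg hp0.le (by norm_num)).ne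
          (by norm_num)
      · exact V2_lt_top.ne
    · apply ENNReal.mul_ne_top
      · apply ENNReal.mul_ne_top (ENNReal.rpow_lt_top_of_nonneg hp0.le (by norm_num)).ne
        exact ENNReal.mul_ne_top
          (ENNReal.mul_ne_top ENNReal.ofReal_ne_top (by norm_num)) V2_lt_top.ne
      · exact ENNReal.inv_ne_top.mpr hβ0
  intro δ hδ hδ1
  set L : ℝ := Real.log (2 / δ) with hL
  have hLlog2 : Real.log 2 ≤ L := by
    apply Real.log_le_log two_pos
    rw [le_div_iff₀ hδ]
    linarith
  have hL0 : 0 < L := lt_of_lt_of_le (by linarith [Real.log_two_gt_d9]) hLlog2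
  set ε : ℝ := 1 / (2 * p) with hε
  have hε0 : 0 < ε := by positivity
  -- pointwise bound
  have hae : ∀ᵐ z : Eu 2, z ∈ ball (0 : Eu 2) (3 * δ) →
      ((2 : ℝ≥0∞) + 2 * ENNReal.ofReal (Real.log (1 / ‖z‖))) ^ p ≤
        2 ^ p * ((5 * ENNReal.ofReal L) ^ p +
          ENNReal.ofReal ((4 * p) ^ p * (3 * δ) ^ ((1:ℝ)/2)) *
            ENNReal.ofReal (‖z‖ ^ (-(1/2) : ℝ))) := by
    have h0 : ∀ᵐ z : Eu 2, z ≠ 0 := by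
      rw [ae_iff]
      simp only [ne_eq, not_not, setOf_eq_eq_singleton]
      exact measure_singleton 0
    filter_upwards [h0] with z hz0 hzB
    have hz1 : 0 < ‖z‖ := norm_pos_iff.mpr hz0
    have hzR : ‖z‖ < 3 * δ := by simpa [mem_ball, dist_eq_norm] using hzB
    set x : ℝ := 3 * δ / ‖z‖ with hx
    have hx1 : 1 < x := by
      rw [hx, lt_div_iff₀ hz1]; linarith
    have hx0 : 0 < x := lt_trans one_pos hx1
    have hlogx0 : 0 < Real.log x := Real.log_pos hx1
    -- step 1 : h z ≤ 5 ofReal L + 2 ofReal (log x)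
    have step1 : (2 : ℝ≥0∞) + 2 * ENNReal.ofReal (Real.log (1 / ‖z‖)) ≤
        5 * ENNReal.ofReal L + 2 * ENNReal.ofReal (Real.log x) := by
      have hsplit : Real.log (1 / ‖z‖) = Real.log (1 / (3 * δ)) + Real.log x := by
        rw [hx, ← Real.log_mul (by positivity) (by positivity)]
        congr 1
        field_simp
      have h2le : (2 : ℝ≥0∞) ≤ 3 * ENNReal.ofReal L := by
        calc (2:ℝ≥0∞) = ENNReal.ofReal (3 * (2/3)) := by norm_num
        _ = 3 * ENNReal.ofReal (2/3) := by
            rw [ENNReal.ofReal_mul (by norm_num)]; norm_num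
        _ ≤ 3 * ENNReal.ofReal L := by
            apply mul_le_mul_right
            apply ENNReal.ofReal_le_ofReal
            calc (2/3 : ℝ) ≤ 0.6931471803 := by norm_num
            _ ≤ Real.log 2 := (Real.log_two_gt_d9).le
            _ ≤ L := hLlog2
      have hlog1 : ENNReal.ofReal (Real.log (1 / (3 * δ))) ≤ ENNReal.ofReal L := by
        apply ENNReal.ofReal_le_ofReal
        apply Real.log_le_log (by positivity)
        rw [div_le_div_iff₀ (by positivity) (by positivity)]
        linarith
      calc (2 : ℝ≥0∞) + 2 * ENNReal.ofReal (Real.log (1 / ‖z‖))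
          ≤ 3 * ENNReal.ofReal L + 2 * (ENNReal.ofReal (Real.log (1 / (3 * δ))) +
            ENNReal.ofReal (Real.log x)) := by
            apply add_le_add h2le
            apply mul_le_mul_right
            rw [hsplit]
            exact ENNReal.ofReal_add_le
        _ ≤ 3 * ENNReal.ofReal L + 2 * (ENNReal.ofReal L + ENNReal.ofReal (Real.log x)) := by
            apply add_le_add le_rfl
            exact mul_le_mul_right (add_le_add hlog1 le_rfl) _
        _ = 5 * ENNReal.ofReal L + 2 * ENNReal.ofReal (Real.log x) := by ring
    -- step 2 : 2 ofReal (log x) ^ p bound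
    have step2 : (2 * ENNReal.ofReal (Real.log x)) ^ p ≤
        ENNReal.ofReal ((4 * p) ^ p * (3 * δ) ^ ((1:ℝ)/2)) *
          ENNReal.ofReal (‖z‖ ^ (-(1/2) : ℝ)) := by
      have hlogle : Real.log x ≤ 2 * p * x ^ ε := by
        calc Real.log x ≤ x ^ ε / ε := log_le_rpow hx0 hε0
        _ = 2 * p * x ^ ε := by rw [hε]; field_simp
      have h2l : 2 * ENNReal.ofReal (Real.log x) ≤ ENNReal.ofReal (4 * p * x ^ ε) := by
        calc 2 * ENNReal.ofReal (Real.log x) = ENNReal.ofReal (2 * Real.log x) := by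
              rw [ENNReal.ofReal_mul (by norm_num)]; norm_num
        _ ≤ ENNReal.ofReal (4 * p * x ^ ε) := by
            apply ENNReal.ofReal_le_ofReal
            nlinarith
      calc (2 * ENNReal.ofReal (Real.log x)) ^ p ≤ (ENNReal.ofReal (4 * p * x ^ ε)) ^ p :=
            ENNReal.rpow_le_rpow h2l hp0.le
      _ = ENNReal.ofReal ((4 * p * x ^ ε) ^ p) :=
            ENNReal.ofReal_rpow_of_nonneg (by positivity) hp0.le
      _ = ENNReal.ofReal ((4 * p) ^ p * x ^ ((1:ℝ)/2)) := by
          have hexp : ε * p = 1 / 2 := by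
            rw [hε]; field_simp
          congr 1
          rw [Real.mul_rpow (by positivity) (by positivity), ← Real.rpow_mul hx0.le, hexp]
      _ = ENNReal.ofReal ((4 * p) ^ p * ((3 * δ) ^ ((1:ℝ)/2) * ‖z‖ ^ (-(1/2) : ℝ))) := by
          congr 2
          rw [hx, Real.div_rpow (by positivity) hz1.le, Real.rpow_neg hz1.le]
          field_simp
      _ = ENNReal.ofReal ((4 * p) ^ p * (3 * δ) ^ ((1:ℝ)/2)) *
            ENNReal.ofReal (‖z‖ ^ (-(1/2) : ℝ)) := by
          rw [← ENNReal.ofReal_mul (by positivity), mul_assoc]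
    calc ((2 : ℝ≥0∞) + 2 * ENNReal.ofReal (Real.log (1 / ‖z‖))) ^ p
        ≤ (5 * ENNReal.ofReal L + 2 * ENNReal.ofReal (Real.log x)) ^ p :=
          ENNReal.rpow_le_rpow step1 hp0.le
      _ ≤ 2 ^ p * ((5 * ENNReal.ofReal L) ^ p + (2 * ENNReal.ofReal (Real.log x)) ^ p) :=
          rpow_add_le _ _ hp0.le
      _ ≤ _ := mul_le_mul_right (add_le_add le_rfl step2) _
  -- integrate
  set c₂ : ℝ≥0∞ := ENNReal.ofReal ((4 * p) ^ p * (3 * δ) ^ ((1:ℝ)/2)) with hc₂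
  have hwmeas : Measurable fun z : Eu 2 => ENNReal.ofReal (‖z‖ ^ (-(1/2) : ℝ)) := by
    apply Measurable.ennreal_ofReal
    exact measurable_norm.pow measurable_const
  have hmeas : Measurable fun z : Eu 2 =>
      2 ^ p * ((5 * ENNReal.ofReal L) ^ p + c₂ * ENNReal.ofReal (‖z‖ ^ (-(1/2) : ℝ))) := by
    exact (measurable_const.add (hwmeas.const_mul _)).const_mul _
  have hvol : volume (ball (0 : Eu 2) (3 * δ)) = ENNReal.ofReal ((3 * δ) ^ 2) * V2 :=
    vol_ball _ (by positivity)
  have hβle : (1:ℝ≥0∞) ≤ β⁻¹ * (ENNReal.ofReal L) ^ p := by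
    have h1 : β ≤ (ENNReal.ofReal L) ^ p :=
      ENNReal.rpow_le_rpow (ENNReal.ofReal_le_ofReal hLlog2) hp0.le
    calc (1:ℝ≥0∞) = β⁻¹ * β := (ENNReal.inv_mul_cancel hβ0 hβtop).symm
    _ ≤ β⁻¹ * (ENNReal.ofReal L) ^ p := mul_le_mul_right h1 _
  have hrball := rpow_ball_int (show (0:ℝ) < 3 * δ by positivity)
  have h3δ : ENNReal.ofReal ((3 * δ) ^ 2) = 9 * ENNReal.ofReal (δ ^ 2) := by
    rw [show (3 * δ) ^ 2 = 9 * δ ^ 2 by ring, ENNReal.ofReal_mul (by norm_num)]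
    norm_num
  have hc₂prod : c₂ * (8 * ENNReal.ofReal ((3 * δ) ^ ((3:ℝ)/2)) * V2) =
      ENNReal.ofReal ((4 * p) ^ p) * 72 * V2 * ENNReal.ofReal (δ ^ 2) := by
    rw [hc₂, ENNReal.ofReal_mul (by positivity)]
    have hrp : ENNReal.ofReal ((3 * δ) ^ ((1:ℝ)/2)) *
        ENNReal.ofReal ((3 * δ) ^ ((3:ℝ)/2)) = ENNReal.ofReal ((3 * δ) ^ 2) := by
      rw [← ENNReal.ofReal_mul (by positivity), ← Real.rpow_add (by positivity)]
      norm_num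
    calc ENNReal.ofReal ((4 * p) ^ p) * ENNReal.ofReal ((3 * δ) ^ ((1:ℝ)/2)) *
          (8 * ENNReal.ofReal ((3 * δ) ^ ((3:ℝ)/2)) * V2)
        = ENNReal.ofReal ((4 * p) ^ p) * 8 * V2 *
          (ENNReal.ofReal ((3 * δ) ^ ((1:ℝ)/2)) * ENNReal.ofReal ((3 * δ) ^ ((3:ℝ)/2))) := by
          ring
      _ = ENNReal.ofReal ((4 * p) ^ p) * 8 * V2 * (9 * ENNReal.ofReal (δ ^ 2)) := by
          rw [hrp, h3δ]
      _ = ENNReal.ofReal ((4 * p) ^ p) * 72 * V2 * ENNReal.ofReal (δ ^ 2) := by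
          ring
  calc ∫⁻ z in ball (0 : Eu 2) (3 * δ),
        ((2 : ℝ≥0∞) + 2 * ENNReal.ofReal (Real.log (1 / ‖z‖))) ^ p
      ≤ ∫⁻ z in ball (0 : Eu 2) (3 * δ),
          2 ^ p * ((5 * ENNReal.ofReal L) ^ p + c₂ * ENNReal.ofReal (‖z‖ ^ (-(1/2) : ℝ))) :=
        setLIntegral_mono_ae (hmeas.aemeasurable) hae
    _ = 2 ^ p * ((5 * ENNReal.ofReal L) ^ p * volume (ball (0 : Eu 2) (3 * δ)) +
          c₂ * ∫⁻ z in ball (0 : Eu 2) (3 * δ), ENNReal.ofReal (‖z‖ ^ (-(1/2) : ℝ))) := by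
        rw [lintegral_const_mul (f := fun z : Eu 2 => (5 * ENNReal.ofReal L) ^ p + c₂ * ENNReal.ofReal (‖z‖ ^ (-(1/2) : ℝ))) _ (measurable_const.add (hwmeas.const_mul c₂))]
        congr 1
        rw [lintegral_add_left measurable_const, setLIntegral_const,
          lintegral_const_mul _ hwmeas]
    _ ≤ 2 ^ p * ((5 * ENNReal.ofReal L) ^ p * (ENNReal.ofReal ((3 * δ) ^ 2) * V2) +
          c₂ * (8 * ENNReal.ofReal ((3 * δ) ^ ((3:ℝ)/2)) * V2)) := by
        apply mul_le_mul_right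
        apply add_le_add
        · rw [hvol]
        · exact mul_le_mul_right hrball _
    _ = 2 ^ p * (5 ^ p * 9 * V2) * ENNReal.ofReal (δ ^ 2) * (ENNReal.ofReal L) ^ p +
        2 ^ p * (ENNReal.ofReal ((4 * p) ^ p) * 72 * V2) * ENNReal.ofReal (δ ^ 2) := by
        rw [hc₂prod, h3δ, ENNReal.mul_rpow_of_nonneg _ _ hp0.le]
        ring
    _ ≤ 2 ^ p * (5 ^ p * 9 * V2) * ENNReal.ofReal (δ ^ 2) * (ENNReal.ofReal L) ^ p +
        2 ^ p * (ENNReal.ofReal ((4 * p) ^ p) * 72 * V2) * β⁻¹ *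
          (ENNReal.ofReal (δ ^ 2) * (ENNReal.ofReal L) ^ p) := by
        apply add_le_add le_rfl
        calc 2 ^ p * (ENNReal.ofReal ((4 * p) ^ p) * 72 * V2) * ENNReal.ofReal (δ ^ 2)
            = 2 ^ p * (ENNReal.ofReal ((4 * p) ^ p) * 72 * V2) * ENNReal.ofReal (δ ^ 2) * 1 :=
              (mul_one _).symm
          _ ≤ 2 ^ p * (ENNReal.ofReal ((4 * p) ^ p) * 72 * V2) * ENNReal.ofReal (δ ^ 2) *
              (β⁻¹ * (ENNReal.ofReal L) ^ p) := mul_le_mul_right hβle _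
          _ = _ := by ring
    _ = (2 ^ p * (5 ^ p * 9 * V2) +
        2 ^ p * (ENNReal.ofReal ((4 * p) ^ p) * 72 * V2) * β⁻¹) *
          ENNReal.ofReal (δ ^ 2) * (ENNReal.ofReal L) ^ p := by ring

/-- inner bound : for y close to x₀ -/
lemma inner_bound {p : ℝ} (hp : 1 ≤ p) :
    ∃ C : ℝ≥0∞, C ≠ ⊤ ∧ ∀ δ : ℝ, 0 < δ → δ ≤ 1 → ∀ x₀ y : Eu 2, dist y x₀ < δ →
      ∫⁻ x in ball x₀ (2 * δ), (ENNReal.ofReal (besselKernel 2 2 (x - y))) ^ p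
        ≤ C * ENNReal.ofReal (δ ^ 2) * (ENNReal.ofReal (Real.log (2 / δ))) ^ p := by
  have hp0 : (0:ℝ) < p := lt_of_lt_of_le one_pos hp
  obtain ⟨C, hCtop, hC⟩ := log_ball_int hp
  refine ⟨C, hCtop, ?_⟩
  intro δ hδ hδ1 x₀ y hy
  set F : Eu 2 → ℝ≥0∞ :=
    fun z => ((2 : ℝ≥0∞) + 2 * ENNReal.ofReal (Real.log (1 / ‖z‖))) ^ p with hF
  have hFmeas : Measurable F := by
    apply Measurable.pow _ measurable_const
    apply Measurable.const_add
    apply Measurable.const_mul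
    apply Measurable.ennreal_ofReal
    exact (measurable_norm.const_div 1).log  -- may need fixing
  have step1 : ∫⁻ x in ball x₀ (2 * δ), (ENNReal.ofReal (besselKernel 2 2 (x - y))) ^ p
      ≤ ∫⁻ x in ball x₀ (2 * δ), F (x - y) := by
    apply setLIntegral_mono_ae ((hFmeas.comp (measurable_id.sub measurable_const)).aemeasurable)
    have h0 : ∀ᵐ x : Eu 2, x ≠ y := by
      rw [ae_iff]
      simp only [ne_eq, not_not, setOf_eq_eq_singleton]
      exact measure_singleton y
    filter_upwards [h0] with x hxy _
    have : x - y ≠ 0 := sub_ne_zero_of_ne hxy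
    exact ENNReal.rpow_le_rpow (kernel_le _ this) hp0.le
  have step2 : ∫⁻ x in ball x₀ (2 * δ), F (x - y) ≤ ∫⁻ z in ball (0 : Eu 2) (3 * δ), F z := by
    have hsub : ∀ x ∈ ball x₀ (2 * δ), x - y ∈ ball (0 : Eu 2) (3 * δ) := by
      intro x hx
      rw [mem_ball, dist_eq_norm] at *
      rw [sub_zero]
      calc ‖x - y‖ ≤ ‖x - x₀‖ + ‖x₀ - y‖ := norm_sub_le_norm_sub_add_norm_sub _ _ _
      _ < 2 * δ + δ := by
          apply add_lt_add hx
          rw [← dist_eq_norm, dist_comm]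
          exact hy
      _ = 3 * δ := by ring
    calc ∫⁻ x in ball x₀ (2 * δ), F (x - y)
        = ∫⁻ x in ball x₀ (2 * δ), (ball (0 : Eu 2) (3 * δ)).indicator F (x - y) := by
          apply setLIntegral_congr_fun measurableSet_ball
          exact fun x hx =>
            (indicator_of_mem (hsub x hx) F).symm
      _ ≤ ∫⁻ x, (ball (0 : Eu 2) (3 * δ)).indicator F (x - y) :=
          setLIntegral_le_lintegral _ _
      _ = ∫⁻ z, (ball (0 : Eu 2) (3 * δ)).indicator F z :=
          lintegral_sub_right_eq_self ((ball (0 : Eu 2) (3 * δ)).indicator F) y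
      _ = ∫⁻ z in ball (0 : Eu 2) (3 * δ), F z :=
          lintegral_indicator measurableSet_ball F
  exact le_trans (le_trans step1 step2) (hC δ hδ hδ1)

theorem stmt16 (τ : ℝ) (hτ1 : 1 ≤ 2 * τ) :
    ∃ c : ℝ≥0, 0 < c ∧ ∀ δ : ℝ, 0 < δ → δ ≤ 1 → ∀ (x₀ : Eu 2) (e : Set (Eu 2))
      (μ : Measure (Eu 2)), IsCompact e → e ⊆ ball x₀ δ → μ eᶜ = 0 →
      (∫⁻ x in ball x₀ (2 * δ), (besselPot2 μ x) ^ (2 * τ)) ≤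
        (c : ℝ≥0∞) * ENNReal.ofReal (δ ^ 2 * (Real.log (2 / δ)) ^ (2 * τ)) *
          (μ e) ^ (2 * τ) := by
  have hp0 : (0:ℝ) < 2 * τ := lt_of_lt_of_le one_pos hτ1
  obtain ⟨C, hCtop, hC⟩ := inner_bound hτ1
  refine ⟨C.toNNReal + 1, lt_of_lt_of_le one_pos le_add_self, ?_⟩
  intro δ hδ hδ1 x₀ e μ hcomp hsub hμc
  have he_meas : MeasurableSet e := hcomp.isClosed.measurableSet
  set L : ℝ := Real.log (2 / δ) with hLdef
  have hL0 : 0 < L := Real.log_pos (by rw [lt_div_iff₀ hδ]; linarith)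
  have hfac_pos : (0:ℝ≥0∞) < ENNReal.ofReal (δ ^ 2 * L ^ (2 * τ)) := by
    rw [ENNReal.ofReal_pos]
    have : (0:ℝ) < L ^ (2 * τ) := Real.rpow_pos_of_pos hL0 _
    positivity
  have hCle : C ≤ ((C.toNNReal + 1 : ℝ≥0) : ℝ≥0∞) := by
    push_cast
    rw [ENNReal.coe_toNNReal hCtop]
    exact le_self_add
  rcases eq_top_or_lt_top (μ e) with htop | hlt
  · rw [htop, ENNReal.top_rpow_of_pos hp0, ENNReal.mul_top]
    · exact le_top
    · apply mul_ne_zero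
      · simp only [ne_eq, ENNReal.coe_eq_zero]
        exact (lt_of_lt_of_le one_pos le_add_self).ne'
      · exact hfac_pos.ne'
  -- finite case
  have hrestrict : μ.restrict e = μ := by
    apply Measure.restrict_eq_self_of_ae_mem
    rw [ae_iff]
    exact hμc
  set ν : Measure (Eu 2) := μ.restrict e with hν
  haveI : IsFiniteMeasure ν := ⟨by rw [hν, Measure.restrict_apply_univ]; exact hlt⟩
  set m : ℝ≥0∞ := μ e with hm
  have hνuniv : ν univ = m := by rw [hν, Measure.restrict_apply_univ]
  set g : Eu 2 → Eu 2 → ℝ≥0∞ := fun x y => ENNReal.ofReal (besselKernel 2 2 (x - y)) with hg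
  have hgmeas2 : Measurable fun q : Eu 2 × Eu 2 => g q.1 q.2 :=
    ((besselKernel_measurable 2 2).comp (measurable_fst.sub measurable_snd)).ennreal_ofReal
  have hgmeas : ∀ x, Measurable fun y => g x y := fun x =>
    ((besselKernel_measurable 2 2).comp (measurable_const.sub measurable_id)).ennreal_ofReal
  have hPot : ∀ x, besselPot2 μ x = ∫⁻ y, g x y ∂ν := by
    intro x
    rw [besselPot2, ← hrestrict]
  have hmp_ne_top : m ^ (2 * τ - 1) ≠ ⊤ :=
    ENNReal.rpow_ne_top_of_nonneg (by linarith) hlt.ne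
  -- pointwise Hölder
  have holder : ∀ x, (∫⁻ y, g x y ∂ν) ^ (2 * τ) ≤
      m ^ (2 * τ - 1) * ∫⁻ y, (g x y) ^ (2 * τ) ∂ν := by
    intro x
    rcases eq_or_lt_of_le hτ1 with heq | hlt1
    · rw [← heq]
      simp [ENNReal.rpow_one, hνuniv]
    · have hpq : (2 * τ).HolderConjugate ((2 * τ) / (2 * τ - 1)) :=
        Real.HolderConjugate.conjExponent hlt1
      have key := ENNReal.lintegral_mul_le_Lp_mul_Lq ν hpq
        (hgmeas x).aemeasurable aemeasurable_const (f := fun y => g x y) (g := fun _ => 1)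
      simp only [Pi.mul_apply, mul_one, ENNReal.one_rpow, lintegral_const, hνuniv,
        one_mul] at key
      calc (∫⁻ y, g x y ∂ν) ^ (2 * τ)
          ≤ ((∫⁻ y, (g x y) ^ (2 * τ) ∂ν) ^ (1 / (2 * τ)) *
              m ^ (1 / ((2 * τ) / (2 * τ - 1)))) ^ (2 * τ) :=
            ENNReal.rpow_le_rpow key hp0.le
        _ = m ^ (2 * τ - 1) * ∫⁻ y, (g x y) ^ (2 * τ) ∂ν := by
            rw [ENNReal.mul_rpow_of_nonneg _ _ hp0.le, ← ENNReal.rpow_mul,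
              ← ENNReal.rpow_mul, one_div_mul_cancel hp0.ne', ENNReal.rpow_one]
            rw [show 1 / ((2 * τ) / (2 * τ - 1)) * (2 * τ) = 2 * τ - 1 by
              field_simp; exact div_self (by linarith : (0:ℝ) < τ).ne']
            ring
  calc ∫⁻ x in ball x₀ (2 * δ), (besselPot2 μ x) ^ (2 * τ)
      = ∫⁻ x in ball x₀ (2 * δ), (∫⁻ y, g x y ∂ν) ^ (2 * τ) := by
        simp only [hPot]
    _ ≤ ∫⁻ x in ball x₀ (2 * δ), m ^ (2 * τ - 1) * ∫⁻ y, (g x y) ^ (2 * τ) ∂ν :=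
        lintegral_mono fun x => holder x
    _ = m ^ (2 * τ - 1) * ∫⁻ x in ball x₀ (2 * δ), ∫⁻ y, (g x y) ^ (2 * τ) ∂ν ∂volume :=
        lintegral_const_mul' _ _ hmp_ne_top
    _ = m ^ (2 * τ - 1) * ∫⁻ y, (∫⁻ x in ball x₀ (2 * δ), (g x y) ^ (2 * τ)) ∂ν := by
        congr 1
        exact lintegral_lintegral_swap ((hgmeas2.pow measurable_const).aemeasurable)
    _ ≤ m ^ (2 * τ - 1) * ∫⁻ _ in e, C * ENNReal.ofReal (δ ^ 2) *
          (ENNReal.ofReal L) ^ (2 * τ) ∂μ := by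
        apply mul_le_mul_right
        rw [hν]
        apply setLIntegral_mono_ae measurable_const.aemeasurable
        refine Filter.Eventually.of_forall fun y hy => ?_
        exact hC δ hδ hδ1 x₀ y (mem_ball.mp (hsub hy))
    _ = m ^ (2 * τ - 1) * (C * ENNReal.ofReal (δ ^ 2) * (ENNReal.ofReal L) ^ (2 * τ) * m) := by
        rw [setLIntegral_const]
    _ = C * ENNReal.ofReal (δ ^ 2) * (ENNReal.ofReal L) ^ (2 * τ) *
          (m ^ (2 * τ - 1) * m) := by ring
    _ = C * ENNReal.ofReal (δ ^ 2) * (ENNReal.ofReal L) ^ (2 * τ) * m ^ (2 * τ) := by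
        congr 1
        have h := ENNReal.rpow_add_of_nonneg (x := m) (2 * τ - 1) 1 (by linarith) zero_le_one
        rw [ENNReal.rpow_one] at h
        rw [← h]
        congr 1
        ring
    _ ≤ ((C.toNNReal + 1 : ℝ≥0) : ℝ≥0∞) *
          ENNReal.ofReal (δ ^ 2 * L ^ (2 * τ)) * m ^ (2 * τ) := by
        apply mul_le_mul_left
        rw [ENNReal.ofReal_mul (by positivity), ← mul_assoc]
        apply mul_le_mul
        · exact mul_le_mul hCle le_rfl zero_le zero_le
        · rw [ENNReal.ofReal_rpow_of_nonneg hL0.le hp0.le]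
        · exact zero_le
        · exact zero_le
end
end
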